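/- A nonprincipal filter on ω either is meager as a subset of 2^ω or does not have the Baire property. -/

import Mathlib

open MeasureTheory Filter Set
open scoped ENNReal

/-- `μ` is the product (Bernoulli) measure on `Bool^ι` determined by the sequence `p`:
a probability measure giving each cylinder set its natural product value. -/
def IsBernoulli {ι : Type*} (μ : Measure (ι → Bool)) (p : ι → ℝ≥0∞) : Prop :=
  IsProbabilityMeasure μ ∧
    ∀ (s : Finset ι) (f : ι → Bool),
      μ {x | ∀ i ∈ s, x i = f i} = ∏ i ∈ s, (if f i then p i else 1 - p i)

/-- The subset of `2^ω` corresponding to a filter on `ω`, via characteristic functions. -/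
def filterSet (F : Filter ℕ) : Set (ℕ → Bool) := {x | {n | x n = true} ∈ F}

/-- any coordinatewise map on `2^ω` is continuous. -/
lemma cont_coord (g : ℕ → Bool → Bool) : Continuous fun x : ℕ → Bool => fun i => g i (x i) :=
  continuous_pi fun i =>
    (continuous_of_discreteTopology (f := g i)).comp (continuous_apply i)

/-- xor with the indicator of a finite set, as a homeomorphism of `2^ω`. -/
def xorHomeo (s : Finset ℕ) : (ℕ → Bool) ≃ₜ (ℕ → Bool) where
  toFun x := fun i => xor (x i) (decide (i ∈ s))
  invFun x := fun i => xor (x i) (decide (i ∈ s))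
  left_inv x := by funext i; simp [Bool.xor_assoc]
  right_inv x := by funext i; simp [Bool.xor_assoc]
  continuous_toFun := cont_coord fun i b => xor b (decide (i ∈ s))
  continuous_invFun := cont_coord fun i b => xor b (decide (i ∈ s))

/-- pointwise negation, as a homeomorphism of `2^ω`. -/
def notHomeo : (ℕ → Bool) ≃ₜ (ℕ → Bool) where
  toFun x := fun i => !(x i)
  invFun x := fun i => !(x i)
  left_inv x := by funext i; simp
  right_inv x := by funext i; simp
  continuous_toFun := cont_coord fun _ b => !b
  continuous_invFun := cont_coord fun _ b => !b

lemma filterSet_invariant (F : Filter ℕ) (hF : F ≤ Filter.cofinite)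
    {x y : ℕ → Bool} (h : {n | x n = y n} ∈ Filter.cofinite) :
    x ∈ filterSet F ↔ y ∈ filterSet F := by
  have hxy : {n | x n = y n} ∈ F := hF h
  constructor
  · intro hx
    exact Filter.mem_of_superset (Filter.inter_mem hx hxy)
      (fun n hn => by rw [Set.mem_setOf_eq, ← hn.2]; exact hn.1)
  · intro hy
    exact Filter.mem_of_superset (Filter.inter_mem hy hxy)
      (fun n hn => by rw [Set.mem_setOf_eq, hn.2]; exact hn.1)

lemma xor_mem_filterSet (F : Filter ℕ) (hF : F ≤ Filter.cofinite) (s : Finset ℕ)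
    (x : ℕ → Bool) : xorHomeo s x ∈ filterSet F ↔ x ∈ filterSet F := by
  apply filterSet_invariant F hF
  have : (s : Set ℕ)ᶜ ⊆ {n | xorHomeo s x n = x n} := by
    intro n hn
    simp only [xorHomeo, Homeomorph.homeomorph_mk_coe, Equiv.coe_fn_mk, mem_setOf_eq]
    have : decide (n ∈ s) = false := by simpa using hn
    rw [this]; cases x n <;> rfl
  exact Filter.mem_of_superset ((Set.Finite.compl_mem_cofinite s.finite_toSet)) this

theorem filter_meager_or_not_baire (F : Filter ℕ) [F.NeBot] (hF : F ≤ Filter.cofinite) :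
    IsMeagre (filterSet F) ∨ ¬ BaireMeasurableSet (filterSet F) := by
  by_cases hB : BaireMeasurableSet (filterSet F)
  swap
  · exact Or.inr hB
  left
  set A := filterSet F with hA
  obtain ⟨U, hU, hAU⟩ := hB.residualEq_isOpen
  -- the set where A and U agree is residual
  have hAUset : {x | x ∈ A ↔ x ∈ U} ∈ residual _ := by
    filter_upwards [hAU] with x hx
    have hx' : A x ↔ U x := by simpa using hx
    exact hx'
  rcases eq_empty_or_nonempty U with rfl | ⟨x₀, hx₀⟩
  · -- A agrees with ∅ residually, hence is meagre
    rw [IsMeagre]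
    filter_upwards [hAUset] with x hx
    simpa using hx
  -- U nonempty: we derive a contradiction with NeBot
  exfalso
  obtain ⟨I, u, hu, hpi⟩ := isOpen_pi_iff.mp hU x₀ hx₀
  -- cylinder around x₀ is inside U
  have hcyl : {y : ℕ → Bool | ∀ i ∈ I, y i = x₀ i} ⊆ U := by
    intro y hy
    apply hpi
    intro i hi
    rw [hy i hi]
    exact (hu i hi).2
  -- U \ A is meagre
  have hUA : IsMeagre (U \ A) := by
    have : (U \ A) ⊆ {x | x ∈ A ↔ x ∈ U}ᶜ := by
      intro x hx
      simp only [mem_compl_iff, mem_setOf_eq]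
      exact fun h => hx.2 (h.mpr hx.1)
    exact Filter.mem_of_superset hAUset (by simpa using compl_subset_compl.mpr this)
  -- Aᶜ is covered by countably many homeomorphic copies of U \ A
  have hcover : Aᶜ ⊆ ⋃ s : Finset ℕ, (xorHomeo s) ⁻¹' (U \ A) := by
    intro y hy
    refine Set.mem_iUnion.mpr ⟨I.filter (fun i => ¬ y i = x₀ i), ?_⟩
    simp only [Set.mem_preimage]
    constructor
    · apply hcyl
      intro i hi
      simp only [xorHomeo, Homeomorph.homeomorph_mk_coe, Equiv.coe_fn_mk]
      by_cases h : y i = x₀ i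
      · have : decide (i ∈ I.filter (fun i => ¬ y i = x₀ i)) = false := by
          simp [Finset.mem_filter, h]
        rw [this, h]; cases x₀ i <;> rfl
      · have : decide (i ∈ I.filter (fun i => ¬ y i = x₀ i)) = true := by
          simp [Finset.mem_filter, hi, h]
        rw [this]
        revert h; cases y i <;> cases x₀ i <;> simp
    · intro hmem
      exact hy ((xor_mem_filterSet F hF _ y).mp hmem)
  have hAc : IsMeagre Aᶜ := by
    refine IsMeagre.mono hcover ?_
    rw [IsMeagre, compl_iUnion]
    rw [countable_iInter_mem]
    intro s
    have : IsMeagre ((xorHomeo s) ⁻¹' (U \ A)) :=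
      hUA.preimage_of_isOpenMap (xorHomeo s).continuous (xorHomeo s).isOpenMap
    exact this
  -- so A is residual; also its flip is residual
  rw [IsMeagre, compl_compl] at hAc
  have hAres : A ∈ residual _ := hAc
  have hflip : notHomeo ⁻¹' A ∈ residual _ :=
    (tendsto_residual_of_isOpenMap notHomeo.continuous notHomeo.isOpenMap) hAres
  have hint : (A ∩ notHomeo ⁻¹' A) ∈ residual _ := Filter.inter_mem hAres hflip
  obtain ⟨x, hx1, hx2⟩ := (dense_of_mem_residual hint).nonempty
  -- x ∈ A and its pointwise negation ∈ A give contradiction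
  have h1 : {n | x n = true} ∈ F := hx1
  have h2 : {n | (notHomeo x) n = true} ∈ F := hx2
  have : (∅ : Set ℕ) ∈ F := by
    refine Filter.mem_of_superset (Filter.inter_mem h1 h2) ?_
    rintro n ⟨ha, hb⟩
    have hb' : (!(x n)) = true := hb
    rw [Set.mem_setOf_eq] at ha
    rw [ha] at hb'
    exact absurd hb' (by simp)
  exact (Filter.empty_notMem F) this
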